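/- Let X := [-1,1]^d and P be a probability measure on X × {-1,1} with fixed posterior version η. Assume Δ_η controls the noise from below with exponent γ ∈ [0,∞) and constant c_LC, and fix r > 0 and the set F_r. Let L be the classification loss and f*_{L,P} a fixed Bayes decision function. Then for all measurable f : X → {-1,1} one has E_P(L_{F_r}∘f − L_{F_r}∘f*_{L,P})² ≤ (c_LC / r^γ) · E_P(L_{F_r}∘f − L_{F_r}∘f*_{L,P}). -/

import Mathlib

open MeasureTheory Set Metric
open scoped Classical ENNReal NNReal

noncomputable section

namespace RefinedMargin

abbrev Pt (d : ℕ) := Fin d → ℝ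

/-- The input space `X = [-1,1]^d` (with the supremum norm coming from `Fin d → ℝ`). -/
def cubeX (d : ℕ) : Set (Pt d) := Set.Icc (fun _ => (-1 : ℝ)) (fun _ => (1 : ℝ))

variable {d : ℕ} {s : ℝ}

/-- `X_1 = {x ∈ X : η x > 1/2}`. -/
def X1 (η : Pt d → ℝ) : Set (Pt d) := {x | x ∈ cubeX d ∧ 1 / 2 < η x}

/-- `X_{-1} = {x ∈ X : η x < 1/2}`. -/
def Xm1 (η : Pt d → ℝ) : Set (Pt d) := {x | x ∈ cubeX d ∧ η x < 1 / 2}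

/-- `X_0 = {x ∈ X : η x = 1/2}`. -/
def X0 (η : Pt d → ℝ) : Set (Pt d) := {x | x ∈ cubeX d ∧ η x = 1 / 2}

/-- Distance to the decision boundary. -/
def Δ (η : Pt d → ℝ) (x : Pt d) : ℝ :=
  if x ∈ Xm1 η then Metric.infDist x (X1 η)
  else if x ∈ X1 η then Metric.infDist x (Xm1 η)
  else 0

/-- Relative boundary of `T` in `X`. -/
def relBoundary (X T : Set (Pt d)) : Set (Pt d) := closure T ∩ closure (X \ T) ∩ X

/-- `T` is `m`-rectifiable: the image of a bounded subset of `ℝ^m` under a Lipschitz map. -/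
def IsRectifiable (m : ℕ) (T : Set (Pt d)) : Prop :=
  ∃ (B : Set (Fin m → ℝ)) (g : (Fin m → ℝ) → Pt d) (K : NNReal),
    Bornology.IsBounded B ∧ LipschitzOnWith K g B ∧ g '' B = T

/-- Margin exponent `α` with constant `cME`. -/
def HasME (μ : Measure (Pt d)) (η : Pt d → ℝ) (α cME : ℝ) : Prop :=
  ∀ t : ℝ, 0 < t → μ {x | Δ η x < t} ≤ ENNReal.ofReal ((cME * t) ^ α)

/-- Margin-noise exponent `β` with constant `cMNE`. -/
def HasMNE (μ : Measure (Pt d)) (η : Pt d → ℝ) (β cMNE : ℝ) : Prop :=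
  ∀ t : ℝ, 0 < t → (∫ x in {x | Δ η x < t}, |2 * η x - 1| ∂μ) ≤ (cMNE * t) ^ β

/-- The distance to the decision boundary controls the noise from below with
exponent `γ` and constant `cLC`. -/
def LowerControl (μ : Measure (Pt d)) (η : Pt d → ℝ) (γ cLC : ℝ) : Prop :=
  ∀ᵐ x ∂μ, Δ η x ^ γ ≤ cLC * |2 * η x - 1|

/-- A partition of `ℝ^d` into (half-open) cubes of side length `s`. -/
structure CubePartition (d : ℕ) (s : ℝ) where
  cell : ℕ → Set (Pt d)
  isCube : ∀ j, ∃ a : Pt d, cell j = {x | ∀ i, a i ≤ x i ∧ x i < a i + s}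
  covers : ∀ x : Pt d, ∃! j, x ∈ cell j

namespace CubePartition

/-- Index of the unique cell containing `x`. -/
def idx (𝒜 : CubePartition d s) (x : Pt d) : ℕ := (𝒜.covers x).choose

/-- The unique cell `A(x)` containing `x`. -/
def cellOf (𝒜 : CubePartition d s) (x : Pt d) : Set (Pt d) := 𝒜.cell (𝒜.idx x)

/-- Indices of cells intersecting `X`. -/
def J (𝒜 : CubePartition d s) : Set ℕ := {j | (𝒜.cell j ∩ cubeX d).Nonempty}

/-- Indices of cells near the decision boundary. -/
def JN (𝒜 : CubePartition d s) (η : Pt d → ℝ) (r : ℝ) : Set ℕ :=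
  {j | j ∈ 𝒜.J ∧ ∀ x ∈ 𝒜.cell j ∩ cubeX d, Δ η x ≤ 3 * r}

/-- Indices of cells far from the decision boundary. -/
def JF (𝒜 : CubePartition d s) (η : Pt d → ℝ) (r : ℝ) : Set ℕ :=
  {j | j ∈ 𝒜.J ∧ ∀ x ∈ 𝒜.cell j ∩ cubeX d, r ≤ Δ η x}

/-- `N_r`, the union of the cells near the decision boundary. -/
def Nr (𝒜 : CubePartition d s) (η : Pt d → ℝ) (r : ℝ) : Set (Pt d) := ⋃ j ∈ 𝒜.JN η r, 𝒜.cell j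

/-- `F_r`, the union of the cells far from the decision boundary. -/
def Fr (𝒜 : CubePartition d s) (η : Pt d → ℝ) (r : ℝ) : Set (Pt d) := ⋃ j ∈ 𝒜.JF η r, 𝒜.cell j

end CubePartition

/-- `sign` with the convention `sign 0 = 1`. -/
def sgn (t : ℝ) : ℝ := if 0 ≤ t then 1 else -1

/-- The classification loss `L(y,t) = 1_{(-∞,0]}(y · sign t)`. -/
def cLoss (y t : ℝ) : ℝ := if y * sgn t ≤ 0 then 1 else 0

/-- The restricted classification loss `L_T(x,y,t) = 1_T(x) L(y,t)`. -/
def rLoss (T : Set (Pt d)) (x : Pt d) (y t : ℝ) : ℝ := if x ∈ T then cLoss y t else 0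

/-- The joint distribution `P` on `X × {-1,1} ⊆ ℝ^d × ℝ` built from the marginal `μ = P_X`
and the posterior probability `η`. -/
def joint (μ : Measure (Pt d)) (η : Pt d → ℝ) : Measure (Pt d × ℝ) :=
  μ.bind fun x =>
    ENNReal.ofReal (η x) • Measure.dirac (x, 1) + ENNReal.ofReal (1 - η x) • Measure.dirac (x, -1)

/-- The risk `R_{L_T,P}(f)`. -/
def risk (P : Measure (Pt d × ℝ)) (T : Set (Pt d)) (f : Pt d → ℝ) : ℝ :=
  ∫ z, rLoss T z.1 z.2 (f z.1) ∂P

/-- The Bayes risk `R*_{L_T,P}`, the infimum over all measurable functions. -/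
def bayesRisk (P : Measure (Pt d × ℝ)) (T : Set (Pt d)) : ℝ :=
  ⨅ f : { f : Pt d → ℝ // Measurable f }, risk P T f.1

/-- The Bayes decision function `sign (2η - 1)`. -/
def bayesF (η : Pt d → ℝ) (x : Pt d) : ℝ := sgn (2 * η x - 1)

/-- The empirical risk of `f` on the dataset `D` for the restricted loss `L_T`. -/
def empRisk {n : ℕ} (D : Fin n → Pt d × ℝ) (T : Set (Pt d)) (f : Pt d → ℝ) : ℝ :=
  (∑ i, rLoss T (D i).1 (D i).2 (f (D i).1)) / (n : ℝ)

/-- `f_{D,s}`. -/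
def fHat (𝒜 : CubePartition d s) {n : ℕ} (D : Fin n → Pt d × ℝ) (x : Pt d) : ℝ :=
  ((∑ i, if (D i).2 = 1 ∧ (D i).1 ∈ 𝒜.cellOf x then (1 : ℝ) else 0) -
      ∑ i, if (D i).2 = -1 ∧ (D i).1 ∈ 𝒜.cellOf x then (1 : ℝ) else 0) / (n : ℝ)

/-- The empirical histogram rule `h_{D,s} = sign f_{D,s}`. -/
def histRule (𝒜 : CubePartition d s) {n : ℕ} (D : Fin n → Pt d × ℝ) (x : Pt d) : ℝ :=
  sgn (fHat 𝒜 D x)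

/-- `f_{P,s}`. -/
def fBar (𝒜 : CubePartition d s) (P : Measure (Pt d × ℝ)) (x : Pt d) : ℝ :=
  (P (𝒜.cellOf x ×ˢ ({1} : Set ℝ))).toReal - (P (𝒜.cellOf x ×ˢ ({-1} : Set ℝ))).toReal

/-- The infinite-sample histogram rule `h_{P,s} = sign f_{P,s}`. -/
def histRuleP (𝒜 : CubePartition d s) (P : Measure (Pt d × ℝ)) (x : Pt d) : ℝ :=
  sgn (fBar 𝒜 P x)

/-- The class `𝓕` of `±1`-valued functions which are constant on the cells meeting `X`
(and `0` elsewhere). -/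
def histClass (𝒜 : CubePartition d s) : Set (Pt d → ℝ) :=
  {f | ∃ c : ℕ → ℝ, (∀ j, c j = 1 ∨ c j = -1) ∧
    ∀ x, f x = if 𝒜.idx x ∈ 𝒜.J then c (𝒜.idx x) else 0}

/-- The `n`-fold product measure `P^n`. -/
def Pn (μ : Measure (Pt d)) (η : Pt d → ℝ) (n : ℕ) : Measure (Fin n → Pt d × ℝ) :=
  Measure.pi fun _ => joint μ η

/-! ### Auxiliary lemmas -/

section Aux

variable {μ : Measure (Pt d)} {η : Pt d → ℝ}

lemma measurable_kernel (hmeasη : Measurable η) :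
    Measurable (fun x : Pt d => ENNReal.ofReal (η x) • Measure.dirac (x, (1 : ℝ)) +
      ENNReal.ofReal (1 - η x) • Measure.dirac (x, (-1 : ℝ))) := by
  apply Measure.measurable_of_measurable_coe
  intro t ht
  simp only [Measure.coe_add, Pi.add_apply, Measure.smul_apply, smul_eq_mul,
    Measure.dirac_apply' _ ht]
  exact ((ENNReal.measurable_ofReal.comp hmeasη).mul
      ((measurable_one.indicator ht).comp (measurable_id.prodMk measurable_const))).add
    ((ENNReal.measurable_ofReal.comp (measurable_const.sub hmeasη)).mul
      ((measurable_one.indicator ht).comp (measurable_id.prodMk measurable_const)))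

lemma joint_lintegral (hmeasη : Measurable η) {h : Pt d × ℝ → ℝ≥0∞} (hm : Measurable h) :
    ∫⁻ z, h z ∂(joint μ η) =
      ∫⁻ x, ENNReal.ofReal (η x) * h (x, 1) + ENNReal.ofReal (1 - η x) * h (x, -1) ∂μ := by
  rw [joint, Measure.lintegral_bind (measurable_kernel hmeasη).aemeasurable hm.aemeasurable]
  refine lintegral_congr fun x => ?_
  rw [lintegral_add_measure, lintegral_smul_measure, lintegral_smul_measure,
    lintegral_dirac' _ hm, lintegral_dirac' _ hm, smul_eq_mul, smul_eq_mul]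

lemma isProbJoint [IsProbabilityMeasure μ] (hη : ∀ x, η x ∈ Set.Icc (0 : ℝ) 1)
    (hmeasη : Measurable η) : IsProbabilityMeasure (joint μ η) := by
  constructor
  rw [joint, Measure.bind_apply MeasurableSet.univ (measurable_kernel hmeasη).aemeasurable]
  have : ∀ x : Pt d, (ENNReal.ofReal (η x) • Measure.dirac (x, (1 : ℝ)) +
      ENNReal.ofReal (1 - η x) • Measure.dirac (x, (-1 : ℝ))) Set.univ = 1 := by
    intro x
    simp only [Measure.add_apply, Measure.smul_apply, smul_eq_mul, Measure.dirac_apply_of_mem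
      (Set.mem_univ _), mul_one]
    rw [← ENNReal.ofReal_add (hη x).1 (by linarith [(hη x).2]),
      show η x + (1 - η x) = 1 by ring, ENNReal.ofReal_one]
  simp only [this, lintegral_one, measure_univ, mul_one]

lemma joint_integral_nonneg [IsProbabilityMeasure μ] (hη : ∀ x, η x ∈ Set.Icc (0 : ℝ) 1)
    (hmeasη : Measurable η) {h : Pt d × ℝ → ℝ} (hm : Measurable h) (h0 : ∀ z, 0 ≤ h z) :
    ∫ z, h z ∂(joint μ η) = ∫ x, (η x * h (x, 1) + (1 - η x) * h (x, -1)) ∂μ := by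
  have hm1 : Measurable fun x : Pt d => h (x, 1) :=
    hm.comp (measurable_id.prodMk measurable_const)
  have hm2 : Measurable fun x : Pt d => h (x, -1) :=
    hm.comp (measurable_id.prodMk measurable_const)
  rw [integral_eq_lintegral_of_nonneg_ae (ae_of_all _ h0) hm.aestronglyMeasurable,
    integral_eq_lintegral_of_nonneg_ae (f := fun x => η x * h (x, 1) + (1 - η x) * h (x, -1))
      (ae_of_all _ fun x => add_nonneg (mul_nonneg (hη x).1 (h0 _))
        (mul_nonneg (by linarith [(hη x).2]) (h0 _)))
      ((hmeasη.mul hm1).add ((measurable_const.sub hmeasη).mul hm2)).aestronglyMeasurable,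
    joint_lintegral hmeasη hm.ennreal_ofReal]
  congr 1
  refine lintegral_congr fun x => ?_
  rw [ENNReal.ofReal_add (mul_nonneg (hη x).1 (h0 _))
      (mul_nonneg (by linarith [(hη x).2]) (h0 _)),
    ENNReal.ofReal_mul (hη x).1, ENNReal.ofReal_mul (by linarith [(hη x).2] : 0 ≤ 1 - η x)]

lemma integrable_of_bound {α : Type*} [MeasurableSpace α] (μ : Measure α) [IsFiniteMeasure μ]
    {g : α → ℝ} (hm : Measurable g) (M : ℝ) (hb : ∀ x, |g x| ≤ M) : Integrable g μ :=
  Integrable.mono' (integrable_const M) hm.aestronglyMeasurable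
    (ae_of_all _ fun x => by rw [Real.norm_eq_abs]; exact hb x)

lemma joint_integral [IsProbabilityMeasure μ] (hη : ∀ x, η x ∈ Set.Icc (0 : ℝ) 1)
    (hmeasη : Measurable η) {h : Pt d × ℝ → ℝ} (hm : Measurable h) (hb : ∀ z, |h z| ≤ 2) :
    ∫ z, h z ∂(joint μ η) = ∫ x, (η x * h (x, 1) + (1 - η x) * h (x, -1)) ∂μ := by
  haveI : IsProbabilityMeasure (joint μ η) := isProbJoint hη hmeasη
  set hp : Pt d × ℝ → ℝ := fun z => max (h z) 0 with hhp
  set hn : Pt d × ℝ → ℝ := fun z => max (-h z) 0 with hhn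
  have hmp : Measurable hp := hm.max measurable_const
  have hmn : Measurable hn := hm.neg.max measurable_const
  have hdec : ∀ z, h z = hp z - hn z := fun z =>
    (max_zero_sub_max_neg_zero_eq_self (h z)).symm
  have hbp : ∀ z, |hp z| ≤ 2 := fun z => by
    rw [abs_of_nonneg (le_max_right _ _)]
    exact max_le (le_of_abs_le (hb z)) (by norm_num)
  have hbn : ∀ z, |hn z| ≤ 2 := fun z => by
    rw [abs_of_nonneg (le_max_right _ _)]
    exact max_le (le_of_abs_le (abs_neg (h z) ▸ hb z)) (by norm_num)
  have h0p : ∀ z, 0 ≤ hp z := fun z => le_max_right _ _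
  have h0n : ∀ z, 0 ≤ hn z := fun z => le_max_right _ _
  have hip : Integrable hp (joint μ η) := integrable_of_bound _ hmp 2 hbp
  have hin : Integrable hn (joint μ η) := integrable_of_bound _ hmn 2 hbn
  have hm1p : Measurable fun x : Pt d => hp (x, 1) :=
    hmp.comp (measurable_id.prodMk measurable_const)
  have hm2p : Measurable fun x : Pt d => hp (x, -1) :=
    hmp.comp (measurable_id.prodMk measurable_const)
  have hm1n : Measurable fun x : Pt d => hn (x, 1) :=
    hmn.comp (measurable_id.prodMk measurable_const)
  have hm2n : Measurable fun x : Pt d => hn (x, -1) :=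
    hmn.comp (measurable_id.prodMk measurable_const)
  have habs : ∀ x, |η x| ≤ 1 ∧ |1 - η x| ≤ 1 := fun x =>
    ⟨abs_le.mpr ⟨by linarith [(hη x).1], (hη x).2⟩,
     abs_le.mpr ⟨by linarith [(hη x).2], by linarith [(hη x).1]⟩⟩
  have hiP : Integrable (fun x => η x * hp (x, 1) + (1 - η x) * hp (x, -1)) μ := by
    refine integrable_of_bound _ ((hmeasη.mul hm1p).add ((measurable_const.sub hmeasη).mul hm2p))
      4 fun x => ?_
    calc |η x * hp (x, 1) + (1 - η x) * hp (x, -1)|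
        ≤ |η x * hp (x, 1)| + |(1 - η x) * hp (x, -1)| := abs_add_le _ _
      _ ≤ 1 * 2 + 1 * 2 := by
          rw [abs_mul, abs_mul]
          exact add_le_add (mul_le_mul (habs x).1 (hbp _) (abs_nonneg _) zero_le_one)
            (mul_le_mul (habs x).2 (hbp _) (abs_nonneg _) zero_le_one)
      _ = 4 := by norm_num
  have hiN : Integrable (fun x => η x * hn (x, 1) + (1 - η x) * hn (x, -1)) μ := by
    refine integrable_of_bound _ ((hmeasη.mul hm1n).add ((measurable_const.sub hmeasη).mul hm2n))
      4 fun x => ?_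
    calc |η x * hn (x, 1) + (1 - η x) * hn (x, -1)|
        ≤ |η x * hn (x, 1)| + |(1 - η x) * hn (x, -1)| := abs_add_le _ _
      _ ≤ 1 * 2 + 1 * 2 := by
          rw [abs_mul, abs_mul]
          exact add_le_add (mul_le_mul (habs x).1 (hbn _) (abs_nonneg _) zero_le_one)
            (mul_le_mul (habs x).2 (hbn _) (abs_nonneg _) zero_le_one)
      _ = 4 := by norm_num
  calc ∫ z, h z ∂(joint μ η) = ∫ z, (hp z - hn z) ∂(joint μ η) := by
        exact integral_congr_ae (ae_of_all _ hdec)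
    _ = ∫ z, hp z ∂(joint μ η) - ∫ z, hn z ∂(joint μ η) := integral_sub hip hin
    _ = (∫ x, (η x * hp (x, 1) + (1 - η x) * hp (x, -1)) ∂μ) -
        ∫ x, (η x * hn (x, 1) + (1 - η x) * hn (x, -1)) ∂μ := by
        rw [joint_integral_nonneg hη hmeasη hmp h0p, joint_integral_nonneg hη hmeasη hmn h0n]
    _ = ∫ x, ((η x * hp (x, 1) + (1 - η x) * hp (x, -1)) -
          (η x * hn (x, 1) + (1 - η x) * hn (x, -1))) ∂μ := (integral_sub hiP hiN).symm
    _ = ∫ x, (η x * h (x, 1) + (1 - η x) * h (x, -1)) ∂μ := by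
        refine integral_congr_ae (ae_of_all _ fun x => ?_)
        simp only [hdec]; ring

lemma measurableSet_cell (𝒜 : CubePartition d s) (j : ℕ) : MeasurableSet (𝒜.cell j) := by
  obtain ⟨a, ha⟩ := 𝒜.isCube j
  rw [ha, show {x : Pt d | ∀ i, a i ≤ x i ∧ x i < a i + s} =
      ⋂ i, ({x : Pt d | a i ≤ x i} ∩ {x : Pt d | x i < a i + s}) by
        ext x; simp [Set.mem_iInter, forall_and]]
  exact MeasurableSet.iInter fun i =>
    (measurableSet_le measurable_const (measurable_pi_apply i)).inter
      (measurableSet_lt (measurable_pi_apply i) measurable_const)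

lemma measurableSet_Fr (𝒜 : CubePartition d s) (η : Pt d → ℝ) (r : ℝ) :
    MeasurableSet (𝒜.Fr η r) :=
  MeasurableSet.biUnion (Set.to_countable _) fun j _ => measurableSet_cell 𝒜 j

lemma measurable_sgn : Measurable sgn :=
  Measurable.ite (measurableSet_le measurable_const measurable_id)
    measurable_const measurable_const

lemma measurable_rLoss {T : Set (Pt d)} (hT : MeasurableSet T) {g : Pt d → ℝ}
    (hg : Measurable g) : Measurable (fun z : Pt d × ℝ => rLoss T z.1 z.2 (g z.1)) := by
  unfold rLoss cLoss
  refine Measurable.ite (hT.preimage measurable_fst) ?_ measurable_const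
  exact Measurable.ite
    (measurableSet_le (measurable_snd.mul (measurable_sgn.comp (hg.comp measurable_fst)))
      measurable_const) measurable_const measurable_const

lemma measurable_bayesF (hmeasη : Measurable η) : Measurable (bayesF η) :=
  measurable_sgn.comp ((measurable_const.mul hmeasη).sub measurable_const)

end Aux

theorem statement5 (d : ℕ) (hd : 1 ≤ d) (s : ℝ) (hs : s ∈ Set.Ioc (0 : ℝ) 1)
    (𝒜 : CubePartition d s)
    (μ : Measure (Pt d)) [IsProbabilityMeasure μ] (hμX : μ (cubeX d)ᶜ = 0)
    (η : Pt d → ℝ) (hη : ∀ x, η x ∈ Set.Icc (0 : ℝ) 1) (hmeasη : Measurable η)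
    (γ cLC : ℝ) (hγ : 0 ≤ γ) (hcLC : 0 < cLC) (hLC : LowerControl μ η γ cLC)
    (r : ℝ) (hr : 0 < r)
    (f : Pt d → ℝ) (hf : Measurable f) (hfpm : ∀ x, f x = 1 ∨ f x = -1) :
    (∫ z, (rLoss (𝒜.Fr η r) z.1 z.2 (f z.1) - rLoss (𝒜.Fr η r) z.1 z.2 (bayesF η z.1)) ^ 2
        ∂(joint μ η)) ≤
      cLC / r ^ γ *
        ∫ z, (rLoss (𝒜.Fr η r) z.1 z.2 (f z.1) - rLoss (𝒜.Fr η r) z.1 z.2 (bayesF η z.1))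
          ∂(joint μ η) := by
  haveI : IsProbabilityMeasure (joint μ η) := isProbJoint hη hmeasη
  have hTm : MeasurableSet (𝒜.Fr η r) := measurableSet_Fr 𝒜 η r
  set T : Set (Pt d) := 𝒜.Fr η r with hTdef
  set G : Pt d × ℝ → ℝ :=
    fun z => rLoss T z.1 z.2 (f z.1) - rLoss T z.1 z.2 (bayesF η z.1) with hGdef
  have hGm : Measurable G :=
    (measurable_rLoss hTm hf).sub (measurable_rLoss hTm (measurable_bayesF hmeasη))
  have hGb : ∀ z, |G z| ≤ 2 := by
    intro z
    simp only [hGdef, rLoss, cLoss]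
    split_ifs <;> norm_num
  have hGb1 : ∀ z, |G z| ≤ 1 := by
    intro z
    simp only [hGdef, rLoss, cLoss]
    split_ifs <;> norm_num
  have hLHS : (∫ z, (rLoss T z.1 z.2 (f z.1) - rLoss T z.1 z.2 (bayesF η z.1)) ^ 2
      ∂(joint μ η)) = ∫ x, (η x * G (x, 1) ^ 2 + (1 - η x) * G (x, -1) ^ 2) ∂μ :=
    joint_integral_nonneg hη hmeasη (hGm.pow_const 2) fun z => sq_nonneg _
  have hRHS : (∫ z, (rLoss T z.1 z.2 (f z.1) - rLoss T z.1 z.2 (bayesF η z.1))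
      ∂(joint μ η)) = ∫ x, (η x * G (x, 1) + (1 - η x) * G (x, -1)) ∂μ :=
    joint_integral hη hmeasη hGm hGb
  rw [hLHS, hRHS]
  set C : ℝ := cLC / r ^ γ with hCdef
  have hC0 : 0 ≤ C := by
    have := Real.rpow_pos_of_pos hr γ
    positivity
  have hXae : ∀ᵐ x ∂μ, x ∈ cubeX d := by
    rw [ae_iff]
    convert hμX using 2
    rfl
  have key : ∀ᵐ x ∂μ, η x * G (x, 1) ^ 2 + (1 - η x) * G (x, -1) ^ 2 ≤
      C * (η x * G (x, 1) + (1 - η x) * G (x, -1)) := by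
    filter_upwards [hLC, hXae] with x hx1 hx2
    obtain ⟨h0η, h1η⟩ := hη x
    by_cases hxT : x ∈ T
    · have hΔ : r ≤ Δ η x := by
        obtain ⟨j, hj, hxj⟩ := Set.mem_iUnion₂.mp hxT
        exact hj.2 x ⟨hxj, hx2⟩
      have h2 : r ^ γ ≤ Δ η x ^ γ := Real.rpow_le_rpow hr.le hΔ hγ
      have h3 : (0 : ℝ) < r ^ γ := Real.rpow_pos_of_pos hr γ
      have h1 : 1 ≤ C * |2 * η x - 1| := by
        rw [hCdef, div_mul_eq_mul_div, le_div_iff₀ h3, one_mul]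
        linarith
      rcases hfpm x with hfx | hfx <;> rcases le_or_gt 0 (2 * η x - 1) with hs2 | hs2
      · have hs2' : (1 : ℝ) ≤ 2 * η x := by linarith
        norm_num [hGdef, rLoss, cLoss, bayesF, sgn, hxT, hfx, hs2']
      · have hs2' : ¬ (1 : ℝ) ≤ 2 * η x := by push_neg; linarith
        rw [abs_of_neg (by linarith)] at h1
        have e1 : G (x, 1) = -1 := by
          norm_num [hGdef, rLoss, cLoss, bayesF, sgn, hxT, hfx, hs2']
        have e2 : G (x, -1) = 1 := by
          norm_num [hGdef, rLoss, cLoss, bayesF, sgn, hxT, hfx, hs2']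
        rw [e1, e2]
        nlinarith
      · have hs2' : (1 : ℝ) ≤ 2 * η x := by linarith
        rw [abs_of_nonneg hs2] at h1
        have e1 : G (x, 1) = 1 := by
          norm_num [hGdef, rLoss, cLoss, bayesF, sgn, hxT, hfx, hs2']
        have e2 : G (x, -1) = -1 := by
          norm_num [hGdef, rLoss, cLoss, bayesF, sgn, hxT, hfx, hs2']
        rw [e1, e2]
        nlinarith
      · have hs2' : ¬ (1 : ℝ) ≤ 2 * η x := by push_neg; linarith
        norm_num [hGdef, rLoss, cLoss, bayesF, sgn, hxT, hfx, hs2']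
    · simp [hGdef, rLoss, hxT]
  have hm1 : Measurable fun x : Pt d => G (x, 1) :=
    hGm.comp (measurable_id.prodMk measurable_const)
  have hm2 : Measurable fun x : Pt d => G (x, -1) :=
    hGm.comp (measurable_id.prodMk measurable_const)
  have habs : ∀ x, |η x| ≤ 1 ∧ |1 - η x| ≤ 1 := fun x =>
    ⟨abs_le.mpr ⟨by linarith [(hη x).1], (hη x).2⟩,
     abs_le.mpr ⟨by linarith [(hη x).2], by linarith [(hη x).1]⟩⟩
  have hiφ : Integrable (fun x => η x * G (x, 1) ^ 2 + (1 - η x) * G (x, -1) ^ 2) μ := by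
    refine integrable_of_bound _ ((hmeasη.mul (hm1.pow_const 2)).add
      ((measurable_const.sub hmeasη).mul (hm2.pow_const 2))) 2 fun x => ?_
    have b1 : |G (x, 1) ^ 2| ≤ 1 := by
      have := hGb1 (x, 1); rw [abs_pow]; nlinarith [abs_nonneg (G (x, 1))]
    have b2 : |G (x, -1) ^ 2| ≤ 1 := by
      have := hGb1 (x, -1); rw [abs_pow]; nlinarith [abs_nonneg (G (x, -1))]
    calc |η x * G (x, 1) ^ 2 + (1 - η x) * G (x, -1) ^ 2|
        ≤ |η x * G (x, 1) ^ 2| + |(1 - η x) * G (x, -1) ^ 2| := abs_add_le _ _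
      _ ≤ 1 * 1 + 1 * 1 := by
          rw [abs_mul, abs_mul]
          exact add_le_add (mul_le_mul (habs x).1 b1 (abs_nonneg _) zero_le_one)
            (mul_le_mul (habs x).2 b2 (abs_nonneg _) zero_le_one)
      _ = 2 := by norm_num
  have hiψ : Integrable (fun x => η x * G (x, 1) + (1 - η x) * G (x, -1)) μ := by
    refine integrable_of_bound _ ((hmeasη.mul hm1).add
      ((measurable_const.sub hmeasη).mul hm2)) 2 fun x => ?_
    calc |η x * G (x, 1) + (1 - η x) * G (x, -1)|
        ≤ |η x * G (x, 1)| + |(1 - η x) * G (x, -1)| := abs_add_le _ _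
      _ ≤ 1 * 1 + 1 * 1 := by
          rw [abs_mul, abs_mul]
          exact add_le_add (mul_le_mul (habs x).1 (hGb1 _) (abs_nonneg _) zero_le_one)
            (mul_le_mul (habs x).2 (hGb1 _) (abs_nonneg _) zero_le_one)
      _ = 2 := by norm_num
  calc ∫ x, (η x * G (x, 1) ^ 2 + (1 - η x) * G (x, -1) ^ 2) ∂μ
      ≤ ∫ x, C * (η x * G (x, 1) + (1 - η x) * G (x, -1)) ∂μ :=
        integral_mono_ae hiφ (hiψ.const_mul C) key
    _ = C * ∫ x, (η x * G (x, 1) + (1 - η x) * G (x, -1)) ∂μ := integral_const_mul _ _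

end RefinedMargin
end
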